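/- Let ν be a measure on (0, ∞) with ∫_0^∞ y ν(dy) < ∞. For each n ∈ ℕ let λ_{n1}, …, λ_{nn} ≥ 0 and r_{n1}, …, r_{nn} > 0 be given. Assume: (i) for every x > 0 with ν({x}) = 0, ∑_{j=1}^n λ_{nj} 1(r_{nj} ≥ x) → ν([x, ∞)) as n → ∞; (ii) for every x > 0 with ν({x}) = 0, ∑_{j=1}^n λ_{nj} r_{nj} 1(r_{nj} ≥ x) → ∫_{[x,∞)} y ν(dy) as n → ∞; and (iii) ∑_{j=1}^n λ_{nj} r_{nj} → ∫_0^∞ y ν(dy) as n → ∞. Then for every θ ∈ ℝ, ∑_{j=1}^n λ_{nj} (e^{iθ r_{nj}} − 1) → ∫_0^∞ (e^{iθ y} − 1) ν(dy) as n → ∞. -/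

import Mathlib

open Finset Filter MeasureTheory

namespace EmpiricalLevyAux

lemma ftc (c : ℂ) {y : ℝ} (hy : 0 ≤ y) :
    ∫ x in Set.Ioc (0:ℝ) y, c * Complex.exp (c * x) = Complex.exp (c * y) - 1 := by
  rw [← intervalIntegral.integral_of_le hy]
  rcases eq_or_ne c 0 with rfl | hc
  · simp
  · rw [intervalIntegral.integral_const_mul, integral_exp_mul_complex hc]
    rw [Complex.ofReal_zero, mul_zero, Complex.exp_zero]
    field_simp

lemma fin_Ici {ν : Measure ℝ} (hmom : Integrable (fun y => y) ν) {a : ℝ} (ha : 0 < a) :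
    ν (Set.Ici a) < ⊤ := by
  have h1 : ∫⁻ y, ENNReal.ofReal y ∂ν < ⊤ := by
    refine lt_of_le_of_lt (lintegral_mono fun y => ?_) hmom.2
    exact Real.ofReal_le_enorm y
  have h2 : ENNReal.ofReal a * ν {y : ℝ | ENNReal.ofReal a ≤ ENNReal.ofReal y}
      ≤ ∫⁻ y, ENNReal.ofReal y ∂ν :=
    mul_meas_ge_le_lintegral₀ (ENNReal.measurable_ofReal.comp measurable_id).aemeasurable _
  have h3 : ν (Set.Ici a) ≤ ν {y : ℝ | ENNReal.ofReal a ≤ ENNReal.ofReal y} :=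
    measure_mono fun y hy => ENNReal.ofReal_le_ofReal hy
  by_contra hcon
  push_neg at hcon
  have htop : ν {y : ℝ | ENNReal.ofReal a ≤ ENNReal.ofReal y} = ⊤ :=
    top_le_iff.mp (le_trans (top_le_iff.mp hcon ▸ le_rfl) h3)
  rw [htop, ENNReal.mul_top (by simp [ENNReal.ofReal_eq_zero, not_le, ha])] at h2
  exact absurd (lt_of_le_of_lt h2 h1) (lt_irrefl _)

lemma sigmaFinite_of_mom {ν : Measure ℝ} (hsupp : ν (Set.Iic 0) = 0)
    (hmom : Integrable (fun y => y) ν) : SigmaFinite ν := by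
  refine ⟨⟨⟨fun n => Set.Iic 0 ∪ Set.Ici (1/(n+1) : ℝ), fun _ => Set.mem_univ _,
    fun n => ?_, ?_⟩⟩⟩
  · refine lt_of_le_of_lt (measure_union_le _ _) ?_
    rw [hsupp, zero_add]
    exact fin_Ici hmom (by positivity)
  · ext x
    simp only [Set.mem_iUnion, Set.mem_union, Set.mem_Iic, Set.mem_Ici, Set.mem_univ, iff_true]
    rcases le_or_gt x 0 with h | h
    · exact ⟨0, Or.inl h⟩
    · obtain ⟨n, hn⟩ := exists_nat_one_div_lt h
      exact ⟨n, Or.inr hn.le⟩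

lemma fub {ν : Measure ℝ} [SigmaFinite ν] (hsupp : ν (Set.Iic 0) = 0)
    (hmom : Integrable (fun y => y) ν)
    (g : ℝ → ℂ) (hg : Measurable g) {C : ℝ} (hC : ∀ x, ‖g x‖ ≤ C) :
    Integrable (fun x => (ν (Set.Ici x)).toReal • g x) (volume.restrict (Set.Ioi 0)) ∧
    ∫ x in Set.Ioi (0:ℝ), (ν (Set.Ici x)).toReal • g x =
      ∫ y in Set.Ioi (0:ℝ), (∫ x in Set.Ioc (0:ℝ) y, g x) ∂ν := by
  have hC0 : 0 ≤ C := le_trans (norm_nonneg (g 0)) (hC 0)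
  set μ : Measure ℝ := volume.restrict (Set.Ioi 0) with hμ
  set H : ℝ → ℝ → ℂ := fun x y => Set.indicator (Set.Ioc (0:ℝ) y) g x with hH
  have hHeq : Function.uncurry H =
      Set.indicator {p : ℝ × ℝ | 0 < p.1 ∧ p.1 ≤ p.2} (fun p => g p.1) := by
    funext p
    simp only [Function.uncurry, hH, Set.indicator_apply, Set.mem_Ioc, Set.mem_setOf_eq]
  have hs : MeasurableSet {p : ℝ × ℝ | 0 < p.1 ∧ p.1 ≤ p.2} :=
    (measurableSet_lt measurable_const measurable_fst).inter
      (measurableSet_le measurable_fst measurable_snd)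
  have hHm : Measurable (Function.uncurry H) := by
    rw [hHeq]; exact (hg.comp measurable_fst).indicator hs
  have hμIoc : ∀ y : ℝ, μ (Set.Ioc (0:ℝ) y) = ENNReal.ofReal y := by
    intro y
    rw [hμ, Measure.restrict_apply measurableSet_Ioc,
      Set.inter_eq_left.mpr Set.Ioc_subset_Ioi_self, Real.volume_Ioc, sub_zero]
  -- integrability of each section in x
  have hsec : ∀ y : ℝ, Integrable (fun x => H x y) μ := by
    intro y
    rw [show (fun x => H x y) = Set.indicator (Set.Ioc (0:ℝ) y) g from rfl,
      integrable_indicator_iff measurableSet_Ioc]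
    refine Measure.integrableOn_of_bounded (M := C) ?_ hg.aestronglyMeasurable ?_
    · exact ((hμIoc y).trans_lt ENNReal.ofReal_lt_top).ne
    · exact Eventually.of_forall fun x => hC x
  -- integrability on the product
  have key : Integrable (Function.uncurry H) (μ.prod ν) := by
    rw [integrable_prod_iff' hHm.aestronglyMeasurable]
    constructor
    · exact Eventually.of_forall fun y => hsec y
    · refine Integrable.mono' (g := fun y => C * max y 0)
        ((hmom.pos_part.const_mul C)) ?_ ?_
      · exact (hHm.norm.stronglyMeasurable.integral_prod_left').aestronglyMeasurable
      · refine Eventually.of_forall fun y => ?_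
        simp only [Function.uncurry_apply_pair]
        have hnn : 0 ≤ ∫ x, ‖H x y‖ ∂μ := integral_nonneg fun x => norm_nonneg _
        rw [Real.norm_eq_abs, abs_of_nonneg hnn]
        have hle : ∀ x, ‖H x y‖ ≤ Set.indicator (Set.Ioc (0:ℝ) y) (fun _ => C) x := by
          intro x
          simp only [hH, Set.indicator_apply]
          split_ifs
          · exact hC x
          · simp
        calc ∫ x, ‖H x y‖ ∂μ ≤ ∫ x, Set.indicator (Set.Ioc (0:ℝ) y) (fun _ => C) x ∂μ := by
              refine integral_mono (hsec y).norm ?_ hle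
              rw [integrable_indicator_iff measurableSet_Ioc]
              exact integrableOn_const ((hμIoc y).trans_lt ENNReal.ofReal_lt_top).ne
          _ = C * max y 0 := by
              rw [integral_indicator measurableSet_Ioc, setIntegral_const, smul_eq_mul,
                measureReal_def, hμIoc y, ENNReal.toReal_ofReal', mul_comm]
  have swap := integral_integral_swap key
  -- identify left inner integrals
  have hleft : ∀ᵐ x ∂μ, (∫ y, H x y ∂ν) = (ν (Set.Ici x)).toReal • g x := by
    filter_upwards [ae_restrict_mem measurableSet_Ioi] with x hx
    have : (fun y => H x y) = Set.indicator (Set.Ici x) (fun _ => g x) := by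
      funext y
      simp only [hH, Set.indicator_apply, Set.mem_Ioc, Set.mem_Ici]
      have hx' : (0:ℝ) < x := hx
      by_cases h : x ≤ y
      · simp [h, hx']
      · simp [h]
    rw [this, integral_indicator_const _ measurableSet_Ici, measureReal_def]
  -- identify right inner integrals
  have hright : ∀ y : ℝ, (∫ x, H x y ∂μ) = ∫ x in Set.Ioc (0:ℝ) y, g x := by
    intro y
    rw [show (fun x => H x y) = Set.indicator (Set.Ioc (0:ℝ) y) g from rfl,
      integral_indicator measurableSet_Ioc, hμ,
      Measure.restrict_restrict measurableSet_Ioc,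
      Set.inter_eq_left.mpr Set.Ioc_subset_Ioi_self]
  have hν : ν.restrict (Set.Ioi 0) = ν := by
    refine Measure.restrict_eq_self_of_ae_mem ?_
    rw [ae_iff]
    convert hsupp using 2
    ext x
    simp
  constructor
  · exact (key.integral_prod_left).congr hleft
  · calc ∫ x in Set.Ioi (0:ℝ), (ν (Set.Ici x)).toReal • g x
        = ∫ x, (∫ y, H x y ∂ν) ∂μ := (integral_congr_ae hleft).symm
      _ = ∫ y, (∫ x, H x y ∂μ) ∂ν := swap
      _ = ∫ y, (∫ x in Set.Ioc (0:ℝ) y, g x) ∂ν := by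
            exact integral_congr_ae (Eventually.of_forall hright)
      _ = ∫ y in Set.Ioi (0:ℝ), (∫ x in Set.Ioc (0:ℝ) y, g x) ∂ν := by rw [hν]

end EmpiricalLevyAux

/-- Convergence of empirical Lévy sums
`∑_j λ_{nj} (e^{iθ r_{nj}} - 1) → ∫_0^∞ (e^{iθy} - 1) ν(dy)`. -/
theorem empirical_levy_sum_tendsto
    (ν : Measure ℝ) (hsupp : ν (Set.Iic 0) = 0)
    (hmom : Integrable (fun y => y) ν)
    (lam r : ℕ → ℕ → ℝ)
    (hlam : ∀ n, ∀ j ∈ Icc 1 n, 0 ≤ lam n j)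
    (hr : ∀ n, ∀ j ∈ Icc 1 n, 0 < r n j)
    (h1 : ∀ x : ℝ, 0 < x → ν {x} = 0 →
      Tendsto (fun n => ∑ j ∈ Icc 1 n, lam n j * (if x ≤ r n j then 1 else 0))
        atTop (nhds ((ν (Set.Ici x)).toReal)))
    (h2 : ∀ x : ℝ, 0 < x → ν {x} = 0 →
      Tendsto (fun n => ∑ j ∈ Icc 1 n, lam n j * r n j * (if x ≤ r n j then 1 else 0))
        atTop (nhds (∫ y in Set.Ici x, y ∂ν)))
    (h3 : Tendsto (fun n => ∑ j ∈ Icc 1 n, lam n j * r n j)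
        atTop (nhds (∫ y in Set.Ioi (0 : ℝ), y ∂ν)))
    (θ : ℝ) :
    Tendsto
      (fun n => ∑ j ∈ Icc 1 n,
        (lam n j : ℂ) * (Complex.exp (Complex.I * θ * r n j) - 1))
      atTop
      (nhds (∫ y in Set.Ioi (0 : ℝ), (Complex.exp (Complex.I * θ * y) - 1) ∂ν)) := by
  haveI : SigmaFinite ν := EmpiricalLevyAux.sigmaFinite_of_mom hsupp hmom
  set c : ℂ := Complex.I * θ with hc
  have hgnorm : ∀ x : ℝ, ‖c * Complex.exp (c * x)‖ = |θ| := by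
    intro x
    have hre : (c * (x:ℂ)).re = 0 := by simp [hc, Complex.mul_re]
    rw [norm_mul, Complex.norm_exp, hre, Real.exp_zero,
      mul_one, hc, norm_mul, Complex.norm_I, one_mul, Complex.norm_real, Real.norm_eq_abs]
  have hgm : Measurable fun x : ℝ => c * Complex.exp (c * x) :=
    measurable_const.mul (Complex.measurable_exp.comp (Complex.measurable_ofReal.const_mul c))
  obtain ⟨hFgInt, hFgEq⟩ := EmpiricalLevyAux.fub hsupp hmom _ hgm (C := |θ|)
    (fun x => (hgnorm x).le)
  have hI : ∫ x in Set.Ioi (0:ℝ), (ν (Set.Ici x)).toReal • (c * Complex.exp (c * x)) =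
      ∫ y in Set.Ioi (0:ℝ), (Complex.exp (c * y) - 1) ∂ν := by
    rw [hFgEq]
    exact setIntegral_congr_fun measurableSet_Ioi fun y hy => EmpiricalLevyAux.ftc c (le_of_lt hy)
  obtain ⟨hF1Int, hF1Eq⟩ := EmpiricalLevyAux.fub hsupp hmom (fun _ => (1:ℂ)) measurable_const
    (C := 1) (fun x => by simp)
  have hFInt : Integrable (fun x => (ν (Set.Ici x)).toReal) (volume.restrict (Set.Ioi 0)) := by
    refine (Integrable.re hF1Int).congr (Eventually.of_forall fun x => ?_)
    simp [Complex.real_smul]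
  have hFeq2 : ∫ x in Set.Ioi (0:ℝ), (ν (Set.Ici x)).toReal = ∫ y in Set.Ioi (0:ℝ), y ∂ν := by
    have h1' : ∫ x in Set.Ioi (0:ℝ), (ν (Set.Ici x)).toReal • (1:ℂ) =
        ((∫ x in Set.Ioi (0:ℝ), (ν (Set.Ici x)).toReal : ℝ) : ℂ) := by
      rw [show (fun x => (ν (Set.Ici x)).toReal • (1:ℂ)) =
        fun x => (((ν (Set.Ici x)).toReal : ℝ) : ℂ) from
        funext fun x => by simp [Complex.real_smul]]
      exact integral_ofReal
    have h2' : ∫ y in Set.Ioi (0:ℝ), (∫ x in Set.Ioc (0:ℝ) y, (1:ℂ)) ∂ν =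
        ((∫ y in Set.Ioi (0:ℝ), y ∂ν : ℝ) : ℂ) := by
      calc ∫ y in Set.Ioi (0:ℝ), (∫ x in Set.Ioc (0:ℝ) y, (1:ℂ)) ∂ν
          = ∫ y in Set.Ioi (0:ℝ), ((y:ℝ):ℂ) ∂ν := by
            refine setIntegral_congr_fun measurableSet_Ioi fun y hy => ?_
            rw [setIntegral_const, measureReal_def, Real.volume_Ioc, sub_zero,
              ENNReal.toReal_ofReal (le_of_lt hy)]
            simp [Complex.real_smul]
        _ = ((∫ y in Set.Ioi (0:ℝ), y ∂ν : ℝ) : ℂ) := integral_ofReal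
    exact_mod_cast (h1'.symm.trans (hF1Eq.trans h2'))
  have hIicIoi : ∀ ρ : ℝ, Set.Iic ρ ∩ Set.Ioi 0 = Set.Ioc 0 ρ := by
    intro ρ; ext x; simp only [Set.mem_inter_iff, Set.mem_Iic, Set.mem_Ioi, Set.mem_Ioc]
    exact and_comm
  have hμIic : ∀ ρ : ℝ, (volume.restrict (Set.Ioi 0)) (Set.Iic ρ) = ENNReal.ofReal ρ := by
    intro ρ
    rw [Measure.restrict_apply measurableSet_Iic, hIicIoi, Real.volume_Ioc, sub_zero]
  -- building block for terms of the empirical sums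
  have hterm : ∀ (a ρ : ℝ), 0 < ρ →
      Integrable (fun x => (a * (if x ≤ ρ then (1:ℝ) else 0)) • (c * Complex.exp (c * x)))
        (volume.restrict (Set.Ioi 0)) ∧
      (∫ x in Set.Ioi (0:ℝ), (a * (if x ≤ ρ then (1:ℝ) else 0)) • (c * Complex.exp (c * x)))
        = a • (Complex.exp (c * ρ) - 1) := by
    intro a ρ hρ
    have heq : (fun x => (a * (if x ≤ ρ then (1:ℝ) else 0)) • (c * Complex.exp (c * x))) =
        Set.indicator (Set.Iic ρ) (fun x => a • (c * Complex.exp (c * x))) := by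
      funext x
      simp only [Set.indicator_apply, Set.mem_Iic]
      split_ifs <;> simp
    have hint : Integrable
        (Set.indicator (Set.Iic ρ) (fun x => a • (c * Complex.exp (c * x))))
        (volume.restrict (Set.Ioi 0)) := by
      rw [integrable_indicator_iff measurableSet_Iic]
      refine Measure.integrableOn_of_bounded (M := |a| * |θ|)
        (((hμIic ρ).trans_lt ENNReal.ofReal_lt_top).ne)
        (hgm.aestronglyMeasurable.const_smul a) ?_
      refine Eventually.of_forall fun x => ?_
      rw [norm_smul, hgnorm x, Real.norm_eq_abs]
    refine ⟨heq ▸ hint, ?_⟩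
    rw [heq, integral_indicator measurableSet_Iic, Measure.restrict_restrict measurableSet_Iic,
      hIicIoi, integral_smul, EmpiricalLevyAux.ftc c (le_of_lt hρ)]
  have htermR : ∀ (a ρ : ℝ), 0 < ρ →
      Integrable (fun x => a * (if x ≤ ρ then (1:ℝ) else 0)) (volume.restrict (Set.Ioi 0)) ∧
      (∫ x in Set.Ioi (0:ℝ), a * (if x ≤ ρ then (1:ℝ) else 0)) = a * ρ := by
    intro a ρ hρ
    have heq : (fun x => a * (if x ≤ ρ then (1:ℝ) else 0)) =
        Set.indicator (Set.Iic ρ) (fun _ => a) := by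
      funext x
      simp only [Set.indicator_apply, Set.mem_Iic]
      split_ifs <;> simp
    have hint : Integrable (Set.indicator (Set.Iic ρ) (fun _ => a))
        (volume.restrict (Set.Ioi 0)) := by
      rw [integrable_indicator_iff measurableSet_Iic]
      exact integrableOn_const ((hμIic ρ).trans_lt ENNReal.ofReal_lt_top).ne
    refine ⟨heq ▸ hint, ?_⟩
    rw [heq, integral_indicator measurableSet_Iic, setIntegral_const, smul_eq_mul,
      measureReal_def, hμIic ρ, ENNReal.toReal_ofReal (le_of_lt hρ), mul_comm]
  -- empirical sums as integrals
  have hsum : ∀ n, (∑ j ∈ Icc 1 n, (lam n j : ℂ) * (Complex.exp (c * r n j) - 1)) =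
      ∫ x in Set.Ioi (0:ℝ),
        (∑ j ∈ Icc 1 n, lam n j * (if x ≤ r n j then (1:ℝ) else 0)) •
          (c * Complex.exp (c * x)) := by
    intro n
    rw [show (fun x => (∑ j ∈ Icc 1 n, lam n j * (if x ≤ r n j then (1:ℝ) else 0)) •
          (c * Complex.exp (c * x))) =
        fun x => ∑ j ∈ Icc 1 n, (lam n j * (if x ≤ r n j then (1:ℝ) else 0)) •
          (c * Complex.exp (c * x)) from funext fun x => by rw [Finset.sum_smul]]
    rw [integral_finset_sum _ (fun j hj => (hterm _ _ (hr n j hj)).1)]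
    refine Finset.sum_congr rfl fun j hj => ?_
    rw [(hterm _ _ (hr n j hj)).2, Complex.real_smul]
  have hsumR : ∀ n, (∫ x in Set.Ioi (0:ℝ),
      ∑ j ∈ Icc 1 n, lam n j * (if x ≤ r n j then (1:ℝ) else 0)) =
      ∑ j ∈ Icc 1 n, lam n j * r n j := by
    intro n
    rw [integral_finset_sum _ (fun j hj => (htermR _ _ (hr n j hj)).1)]
    exact Finset.sum_congr rfl fun j hj => (htermR _ _ (hr n j hj)).2
  have hFnInt : ∀ n, Integrable
      (fun x => ∑ j ∈ Icc 1 n, lam n j * (if x ≤ r n j then (1:ℝ) else 0))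
      (volume.restrict (Set.Ioi 0)) :=
    fun n => integrable_finset_sum _ (fun j hj => (htermR _ _ (hr n j hj)).1)
  have hFgnInt : ∀ n, Integrable
      (fun x => (∑ j ∈ Icc 1 n, lam n j * (if x ≤ r n j then (1:ℝ) else 0)) •
        (c * Complex.exp (c * x))) (volume.restrict (Set.Ioi 0)) := by
    intro n
    rw [show (fun x => (∑ j ∈ Icc 1 n, lam n j * (if x ≤ r n j then (1:ℝ) else 0)) •
          (c * Complex.exp (c * x))) =
        fun x => ∑ j ∈ Icc 1 n, (lam n j * (if x ≤ r n j then (1:ℝ) else 0)) •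
          (c * Complex.exp (c * x)) from funext fun x => by rw [Finset.sum_smul]]
    exact integrable_finset_sum _ (fun j hj => (hterm _ _ (hr n j hj)).1)
  -- a.e. convergence of the empirical distribution functions
  have hA : Set.Countable {t : ℝ | 0 < ν {t}} := by
    have := Measure.countable_meas_level_set_pos (μ := ν) (measurable_id (α := ℝ))
    simpa [Set.setOf_eq_eq_singleton] using this
  have haeT : ∀ᵐ x ∂(volume.restrict (Set.Ioi 0)),
      Tendsto (fun n => ∑ j ∈ Icc 1 n, lam n j * (if x ≤ r n j then (1:ℝ) else 0)) atTop
        (nhds ((ν (Set.Ici x)).toReal)) := by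
    have hvol : volume {t : ℝ | ν {t} ≠ 0} = 0 := by
      have hset : {t : ℝ | ν {t} ≠ 0} = {t : ℝ | 0 < ν {t}} := by
        ext t; simp [pos_iff_ne_zero]
      rw [hset]; exact hA.measure_zero _
    have h0 : ∀ᵐ x ∂(volume.restrict (Set.Ioi 0)), ν {x} = 0 := by
      refine ae_restrict_of_ae ?_
      rw [ae_iff]; simpa using hvol
    filter_upwards [ae_restrict_mem measurableSet_Ioi, h0] with x hx hx0
    exact h1 x hx hx0
  -- nonnegativity
  have hFnonneg : ∀ x : ℝ, 0 ≤ (ν (Set.Ici x)).toReal := fun x => ENNReal.toReal_nonneg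
  have hFnnonneg : ∀ n (x : ℝ),
      0 ≤ ∑ j ∈ Icc 1 n, lam n j * (if x ≤ r n j then (1:ℝ) else 0) :=
    fun n x => Finset.sum_nonneg fun j hj =>
      mul_nonneg (hlam n j hj) (by split_ifs <;> norm_num)
  -- Scheffé argument
  have hT2 : Tendsto (fun n => ∫ x in Set.Ioi (0:ℝ),
      max ((ν (Set.Ici x)).toReal -
        ∑ j ∈ Icc 1 n, lam n j * (if x ≤ r n j then (1:ℝ) else 0)) 0) atTop (nhds 0) := by
    have hdct := tendsto_integral_of_dominated_convergence (μ := volume.restrict (Set.Ioi 0))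
      (F := fun n x => max ((ν (Set.Ici x)).toReal -
        ∑ j ∈ Icc 1 n, lam n j * (if x ≤ r n j then (1:ℝ) else 0)) 0)
      (f := fun _ => (0:ℝ)) (fun x => (ν (Set.Ici x)).toReal)
      (fun n => ((hFInt.sub (hFnInt n)).pos_part).aestronglyMeasurable)
      hFInt
      (fun n => Eventually.of_forall fun x => by
        rw [Real.norm_eq_abs, abs_of_nonneg (le_max_right _ _)]
        exact max_le (by linarith [hFnnonneg n x]) (hFnonneg x))
      (by
        filter_upwards [haeT] with x hx
        have := (tendsto_const_nhds (x := (ν (Set.Ici x)).toReal)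
          (f := atTop (α := ℕ))).sub hx
        simpa using this.max (tendsto_const_nhds (x := (0:ℝ))))
    simpa using hdct
  have hT1 : Tendsto (fun n => (∫ x in Set.Ioi (0:ℝ),
      ∑ j ∈ Icc 1 n, lam n j * (if x ≤ r n j then (1:ℝ) else 0)) -
      ∫ x in Set.Ioi (0:ℝ), (ν (Set.Ici x)).toReal) atTop (nhds 0) := by
    have h3' := h3.sub_const (∫ x in Set.Ioi (0:ℝ), (ν (Set.Ici x)).toReal)
    rw [← hFeq2, sub_self] at h3'
    refine h3'.congr fun n => ?_
    rw [hsumR n]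
  have habs : Tendsto (fun n => ∫ x in Set.Ioi (0:ℝ),
      |(∑ j ∈ Icc 1 n, lam n j * (if x ≤ r n j then (1:ℝ) else 0)) -
        (ν (Set.Ici x)).toReal|) atTop (nhds 0) := by
    have hid : ∀ n, (∫ x in Set.Ioi (0:ℝ),
        |(∑ j ∈ Icc 1 n, lam n j * (if x ≤ r n j then (1:ℝ) else 0)) -
          (ν (Set.Ici x)).toReal|) =
        ((∫ x in Set.Ioi (0:ℝ),
          ∑ j ∈ Icc 1 n, lam n j * (if x ≤ r n j then (1:ℝ) else 0)) -
          ∫ x in Set.Ioi (0:ℝ), (ν (Set.Ici x)).toReal) +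
        2 * ∫ x in Set.Ioi (0:ℝ), max ((ν (Set.Ici x)).toReal -
          ∑ j ∈ Icc 1 n, lam n j * (if x ≤ r n j then (1:ℝ) else 0)) 0 := by
      intro n
      have hintA : Integrable (fun x =>
          (∑ j ∈ Icc 1 n, lam n j * (if x ≤ r n j then (1:ℝ) else 0)) -
            (ν (Set.Ici x)).toReal) (volume.restrict (Set.Ioi 0)) := (hFnInt n).sub hFInt
      have hintB : Integrable (fun x =>
          2 * max ((ν (Set.Ici x)).toReal -
            ∑ j ∈ Icc 1 n, lam n j * (if x ≤ r n j then (1:ℝ) else 0)) 0)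
          (volume.restrict (Set.Ioi 0)) := ((hFInt.sub (hFnInt n)).pos_part).const_mul 2
      calc (∫ x in Set.Ioi (0:ℝ),
            |(∑ j ∈ Icc 1 n, lam n j * (if x ≤ r n j then (1:ℝ) else 0)) -
              (ν (Set.Ici x)).toReal|)
          = ∫ x in Set.Ioi (0:ℝ),
            (((∑ j ∈ Icc 1 n, lam n j * (if x ≤ r n j then (1:ℝ) else 0)) -
              (ν (Set.Ici x)).toReal) +
            2 * max ((ν (Set.Ici x)).toReal -
              ∑ j ∈ Icc 1 n, lam n j * (if x ≤ r n j then (1:ℝ) else 0)) 0) := by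
            congr 1
            funext x
            rcases le_total ((ν (Set.Ici x)).toReal)
              (∑ j ∈ Icc 1 n, lam n j * (if x ≤ r n j then (1:ℝ) else 0)) with h | h
            · rw [abs_of_nonneg (sub_nonneg.2 h), max_eq_right (sub_nonpos.2 h)]; ring
            · rw [abs_of_nonpos (sub_nonpos.2 h), max_eq_left (sub_nonneg.2 h)]; ring
        _ = (∫ x in Set.Ioi (0:ℝ),
              ((∑ j ∈ Icc 1 n, lam n j * (if x ≤ r n j then (1:ℝ) else 0)) -
                (ν (Set.Ici x)).toReal)) +
            ∫ x in Set.Ioi (0:ℝ),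
              2 * max ((ν (Set.Ici x)).toReal -
                ∑ j ∈ Icc 1 n, lam n j * (if x ≤ r n j then (1:ℝ) else 0)) 0 :=
            integral_add hintA hintB
        _ = _ := by
            rw [integral_sub (hFnInt n) hFInt, integral_const_mul]
    have hlim : Tendsto (fun n =>
        ((∫ x in Set.Ioi (0:ℝ),
          ∑ j ∈ Icc 1 n, lam n j * (if x ≤ r n j then (1:ℝ) else 0)) -
          ∫ x in Set.Ioi (0:ℝ), (ν (Set.Ici x)).toReal) +
        2 * ∫ x in Set.Ioi (0:ℝ), max ((ν (Set.Ici x)).toReal -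
          ∑ j ∈ Icc 1 n, lam n j * (if x ≤ r n j then (1:ℝ) else 0)) 0) atTop
        (nhds (0 + 2 * 0)) := hT1.add (hT2.const_mul 2)
    rw [show (0:ℝ) + 2 * 0 = 0 by ring] at hlim
    exact hlim.congr fun n => (hid n).symm
  -- final squeeze
  have hbound : ∀ n,
      ‖(∑ j ∈ Icc 1 n, (lam n j : ℂ) * (Complex.exp (c * r n j) - 1)) -
        ∫ y in Set.Ioi (0:ℝ), (Complex.exp (c * y) - 1) ∂ν‖ ≤
      |θ| * ∫ x in Set.Ioi (0:ℝ),
        |(∑ j ∈ Icc 1 n, lam n j * (if x ≤ r n j then (1:ℝ) else 0)) -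
          (ν (Set.Ici x)).toReal| := by
    intro n
    rw [hsum n, ← hI, ← integral_sub (hFgnInt n) hFgInt]
    rw [show (fun x => (∑ j ∈ Icc 1 n, lam n j * (if x ≤ r n j then (1:ℝ) else 0)) •
          (c * Complex.exp (c * x)) -
          (ν (Set.Ici x)).toReal • (c * Complex.exp (c * x))) =
        fun x => ((∑ j ∈ Icc 1 n, lam n j * (if x ≤ r n j then (1:ℝ) else 0)) -
          (ν (Set.Ici x)).toReal) • (c * Complex.exp (c * x))
        from funext fun x => by rw [sub_smul]]
    refine le_trans (norm_integral_le_integral_norm _) (le_of_eq ?_)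
    rw [← integral_const_mul]
    congr 1
    funext x
    rw [norm_smul, hgnorm x, Real.norm_eq_abs, mul_comm]
  have hsq := squeeze_zero (fun n => norm_nonneg _) hbound
    (by simpa using habs.const_mul |θ|)
  exact tendsto_iff_norm_sub_tendsto_zero.mpr hsq
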